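/- If an inversion sequence e has an occurrence of the consecutive pattern 0102 at position i, then replacing e_{i+2} by e_{i+1} yields an inversion sequence with an occurrence of 0112 at position i (the change operation from 0102 to 0112 is always valid). -/
import Mathlib

/-- Changing an occurrence of 0102 to 0112 is always valid: if an inversion
sequence `e` (0-indexed: `e i ≤ i`) has an occurrence of 0102 at position `i`
(`e i = e (i+2)`, `e i < e (i+1) < e (i+3)`), then replacing `e (i+2)` by
`e (i+1)` yields an inversion sequence with an occurrence of 0112 at `i`
(`e i < e (i+1) = e (i+2) < e (i+3)`). -/
theorem change_0102_to_0112 (n : ℕ) (e : ℕ → ℕ)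
    (hinv : ∀ j, j < n → e j ≤ j)
    (i : ℕ) (hi : i + 3 < n)
    (hocc : e i = e (i+2) ∧ e i < e (i+1) ∧ e (i+1) < e (i+3)) :
    let e' := Function.update e (i+2) (e (i+1))
    (∀ j, j < n → e' j ≤ j) ∧
      (e' i < e' (i+1) ∧ e' (i+1) = e' (i+2) ∧ e' (i+2) < e' (i+3)) := by
  obtain ⟨h1, h2, h3⟩ := hocc
  intro e'
  have h1' : e (i+1) ≤ i + 1 := hinv _ (by omega)
  constructor
  · intro j hj
    by_cases hje : j = i + 2
    · subst hje; simp [e', Function.update]; omega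
    · simp [e', Function.update, hje]; exact hinv j hj
  · refine ⟨?_, ?_, ?_⟩ <;>
      simp [e', Function.update, show ¬(i = i+2) by omega,
        show ¬(i+1 = i+2) by omega, show ¬(i+3 = i+2) by omega] <;> omega
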